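/- Suppose ‖H‖₂ > 0, each map Ψ_{t_k} is differentiable on B_R with Jacobian (Fréchet derivative) JΨ_{t_k}(v) satisfying det(JΨ_{t_k}(v)) ≠ 0 for all v ∈ B_R, k ∈ ℕ. For k ∈ ℕ let S_J(u,k) := {v ∈ B_R : det(JΨ_{t_k}(v)) = det(JΨ_{t_k}(u))}. Suppose there are anti-leaf sets Ũ(u,k) ⊆ S_J(u,k) such that {‖Ψ_{t_k}(v) − Ψ_{t_k}(u)‖₂ : v ∈ Ũ(u,k)} = [0, d̃^{(2)}_max(u,k)], and for every v ∈ Ũ(u,k), ∑_{i=0}^{k} ‖Ψ_{t_i}(v) − Ψ_{t_i}(u)‖₂² ≤ C̃^{(2)}(u,k)·‖Ψ_{t_k}(v) − Ψ_{t_k}(u)‖₂²; suppose further there is a strictly increasing sequence i₁ < i₂ < … and constants C̃^{(2)}(u) < ∞, d̃^{(2)}_max(u) > 0 with C̃^{(2)}(u,i_j) ≤ C̃^{(2)}(u) and d̃^{(2)}_max(u,i_j) ≥ d̃^{(2)}_max(u) for all j. Suppose q is continuous at u, q(u) > 0, and q(v) > 0 for every v ∈ ∪_k Ũ(u,k). Define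 the filter likelihood ratio L_k(v) := (q(v)/q(u))·(det(JΨ_{t_k}(u))/det(JΨ_{t_k}(v)))·∏_{i=0}^{k} exp(−(‖H Ψ_{t_i}(v) − Y_i‖₂² − ‖H Ψ_{t_i}(u) − Y_i‖₂²)/(2ε²)). Then there exists ε₀ > 0 such that for every ε ∈ (0, ε₀] and every j ≥ 1, E[diam₂({Ψ_{t_{i_j}}(v) : v ∈ B_R, L_{i_j}(v) ≥ 1/e})] ≥ ε/(2·‖H‖₂·√(C̃^{(2)}(u))). -/

import Mathlib

open MeasureTheory ProbabilityTheory Set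
open scoped ENNReal

noncomputable section

/-- The determinant of the Jacobian (Fréchet derivative) of `Ψ_{t}` at `v`. -/
def jacDet {d : ℕ}
    (Ψ : ℝ → EuclideanSpace ℝ (Fin d) → EuclideanSpace ℝ (Fin d))
    (t : ℝ) (v : EuclideanSpace ℝ (Fin d)) : ℝ :=
  LinearMap.det (fderiv ℝ (Ψ t) v).toLinearMap

/-- The likelihood ratio of the filtering density at `Ψ_{t_k}(v)` against the
one at `Ψ_{t_k}(u)`, after observations `Y_i = H Ψ_{t_i}(u) + Z_i(ω)`,
`0 ≤ i ≤ k`, for Gaussian observation noise with covariance `ε²` times the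
identity. -/
def filterRatio {d dO : ℕ} {Ω : Type*}
    (Ψ : ℝ → EuclideanSpace ℝ (Fin d) → EuclideanSpace ℝ (Fin d))
    (H : EuclideanSpace ℝ (Fin d) →L[ℝ] EuclideanSpace ℝ (Fin dO))
    (q : EuclideanSpace ℝ (Fin d) → ℝ) (h ε : ℝ)
    (u : EuclideanSpace ℝ (Fin d)) (Z : ℕ → Ω → EuclideanSpace ℝ (Fin dO))
    (k : ℕ) (v : EuclideanSpace ℝ (Fin d)) (ω : Ω) : ℝ :=
  (q v / q u) * (jacDet Ψ (k * h) u / jacDet Ψ (k * h) v) *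
    ∏ i ∈ Finset.range (k + 1),
      Real.exp (-(‖H (Ψ (i * h) v) - (H (Ψ (i * h) u) + Z i ω)‖ ^ 2 -
        ‖H (Ψ (i * h) u) - (H (Ψ (i * h) u) + Z i ω)‖ ^ 2) / (2 * ε ^ 2))

open scoped NNReal

section Aux

variable {Ω : Type*} [MeasurableSpace Ω] {μ : Measure Ω}

lemma aux_symm_add [IsProbabilityMeasure μ] {X Y : Ω → ℝ}
    (hX : Measurable X) (hY : Measurable Y) (hind : IndepFun X Y μ)
    (hsX : μ.map (fun ω => -X ω) = μ.map X) (hsY : μ.map (fun ω => -Y ω) = μ.map Y) :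
    μ.map (fun ω => -(X ω + Y ω)) = μ.map (fun ω => X ω + Y ω) := by
  have hind' : IndepFun (fun ω => -X ω) (fun ω => -Y ω) μ :=
    hind.comp measurable_neg measurable_neg
  have h1 := (indepFun_iff_map_prod_eq_prod_map_map hX.aemeasurable hY.aemeasurable).mp hind
  have h2 := (indepFun_iff_map_prod_eq_prod_map_map (show Measurable (fun ω => -X ω) from hX.neg).aemeasurable
    (show Measurable (fun ω => -Y ω) from hY.neg).aemeasurable).mp hind'
  have hadd : Measurable (fun p : ℝ × ℝ => p.1 + p.2) := measurable_add
  have e1 : (fun ω => -(X ω + Y ω)) =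
      (fun p : ℝ × ℝ => p.1 + p.2) ∘ (fun ω => (-X ω, -Y ω)) := by
    funext ω; simp [Function.comp]; ring
  have e2 : (fun ω => X ω + Y ω) =
      (fun p : ℝ × ℝ => p.1 + p.2) ∘ (fun ω => (X ω, Y ω)) := rfl
  rw [e1, e2, ← Measure.map_map hadd (show Measurable (fun ω => (-X ω, -Y ω)) from hX.neg.prodMk hY.neg),
    ← Measure.map_map hadd (hX.prodMk hY), h1, h2, hsX, hsY]

lemma aux_symm_sum [IsProbabilityMeasure μ] {ι : Type*} {X : ι → Ω → ℝ}
    (hmeas : ∀ p, Measurable (X p))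
    (hindep : iIndepFun X μ)
    (hsymm : ∀ p, μ.map (fun ω => -(X p ω)) = μ.map (X p)) (F : Finset ι) :
    μ.map (fun ω => -∑ p ∈ F, X p ω) = μ.map (fun ω => ∑ p ∈ F, X p ω) := by
  classical
  induction F using Finset.induction_on with
  | empty => simp
  | insert a s ha ih =>
    have hS : Measurable (fun ω => ∑ p ∈ s, X p ω) := by
      apply Finset.measurable_sum; exact fun p _ => hmeas p
    have hind : IndepFun (X a) (fun ω => ∑ p ∈ s, X p ω) μ := by
      have h := (hindep.indepFun_finsetSum_of_notMem hmeas ha).symm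
      have e : (∑ j ∈ s, X j) = fun ω => ∑ p ∈ s, X p ω := by
        funext ω; simp
      rwa [e] at h
    have := aux_symm_add (hmeas a) hS hind (hsymm a) ih
    simpa [Finset.sum_insert ha] using this

lemma aux_half_le_prob [IsProbabilityMeasure μ] {W : Ω → ℝ}
    (hW : Measurable W) (hsymm : μ.map (fun ω => -W ω) = μ.map W) :
    (1 : ℝ≥0∞) / 2 ≤ μ {ω | 0 ≤ W ω} := by
  set m := μ.map W with hm
  have hprob : IsProbabilityMeasure m := Measure.isProbabilityMeasure_map hW.aemeasurable
  have hIci : μ {ω | 0 ≤ W ω} = m (Ici 0) := by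
    rw [hm, Measure.map_apply hW measurableSet_Ici]
    rfl
  have hkey : m (Iic 0) = m (Ici 0) := by
    have h1 : μ.map (fun ω => -W ω) = m.map (fun x : ℝ => -x) := by
      rw [hm, Measure.map_map measurable_neg hW]; rfl
    have h2 : m.map (fun x : ℝ => -x) (Ici 0) = m (Iic 0) := by
      rw [Measure.map_apply measurable_neg measurableSet_Ici]
      congr 1
      ext x
      simp [neg_nonneg]
    calc m (Iic 0) = m.map (fun x : ℝ => -x) (Ici 0) := h2.symm
      _ = μ.map (fun ω => -W ω) (Ici 0) := by rw [h1]
      _ = m (Ici 0) := by rw [hsymm]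
  have hunion : (1 : ℝ≥0∞) ≤ m (Iic 0) + m (Ici 0) := by
    have : m univ ≤ m (Iic 0) + m (Ici 0) := by
      rw [← Iic_union_Ici (a := (0:ℝ))]
      exact measure_union_le _ _
    simpa using this
  rw [hkey, ← two_mul] at hunion
  rw [hIci]
  rw [ENNReal.div_le_iff (by norm_num) (by norm_num)]
  calc (1:ℝ≥0∞) ≤ 2 * m (Ici 0) := hunion
    _ = m (Ici 0) * 2 := mul_comm _ _

lemma aux_scaled_symm [IsProbabilityMeasure μ] {X : Ω → ℝ} (hX : Measurable X)
    {v : ℝ≥0} (hlaw : μ.map X = gaussianReal 0 v) (c : ℝ) :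
    μ.map (fun ω => -(c * X ω)) = μ.map (fun ω => c * X ω) := by
  have law : ∀ a : ℝ, μ.map (fun ω => a * X ω)
      = gaussianReal 0 (⟨a ^ 2, sq_nonneg a⟩ * v) := by
    intro a
    have h1 : μ.map (fun ω => a * X ω) = (μ.map X).map (a * ·) :=
      (Measure.map_map (measurable_id.const_mul a) hX).symm
    rw [h1, hlaw, gaussianReal_map_const_mul, mul_zero]
    rfl
  have e : (fun ω => -(c * X ω)) = fun ω => (-c) * X ω := by funext ω; ring
  have e2 : (⟨(-c) ^ 2, sq_nonneg _⟩ : ℝ≥0) = ⟨c ^ 2, sq_nonneg _⟩ := by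
    ext; simp
  rw [e, law, law, e2]

end Aux

set_option maxHeartbeats 2000000 in
/-- lower bound on the expected Euclidean diameter of the set of
points of high likelihood for the filter, with Gaussian noise, under the
anti-leaf-set assumption (Assumption 6). -/
theorem expected_diam_high_likelihood_filter {d dO : ℕ}
    (A : EuclideanSpace ℝ (Fin d) →L[ℝ] EuclideanSpace ℝ (Fin d))
    (B : EuclideanSpace ℝ (Fin d) →L[ℝ] EuclideanSpace ℝ (Fin d) →L[ℝ] EuclideanSpace ℝ (Fin d))
    (f : EuclideanSpace ℝ (Fin d))
    (R δ : ℝ) (hR : 0 < R) (hδ : 0 < δ)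
    (htrap : ∀ x : EuclideanSpace ℝ (Fin d),
      ‖x‖ ∈ Icc R (R + δ) → (inner ℝ (f - A x - B x x) x : ℝ) ≤ 0)
    (Ψ : ℝ → EuclideanSpace ℝ (Fin d) → EuclideanSpace ℝ (Fin d))
    (hΨ0 : ∀ x, ‖x‖ ≤ R → Ψ 0 x = x)
    (hΨR : ∀ x, ‖x‖ ≤ R → ∀ t : ℝ, 0 ≤ t → ‖Ψ t x‖ ≤ R)
    (hΨode : ∀ x, ‖x‖ ≤ R → ∀ t : ℝ, 0 ≤ t →
      HasDerivWithinAt (fun s => Ψ s x)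
        (f - A (Ψ t x) - B (Ψ t x) (Ψ t x)) (Ici 0) t)
    (h : ℝ) (hh : 0 < h)
    (H : EuclideanSpace ℝ (Fin d) →L[ℝ] EuclideanSpace ℝ (Fin dO)) (hH : 0 < ‖H‖)
    (Ω : Type*) [MeasurableSpace Ω] (μ : Measure Ω) [IsProbabilityMeasure μ]
    -- a family of i.i.d. `N(0, ε² I)` noises, one for each noise level `ε > 0`
    (Z : ℝ → ℕ → Ω → EuclideanSpace ℝ (Fin dO))
    (hZmeas : ∀ ε : ℝ, 0 < ε → ∀ i, Measurable (Z ε i))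
    (hZindep : ∀ ε : ℝ, 0 < ε → iIndepFun
      (fun p : ℕ × Fin dO => fun ω => Z ε p.1 ω p.2) μ)
    (hZlaw : ∀ ε : ℝ, 0 < ε → ∀ i : ℕ, ∀ j : Fin dO,
      Measure.map (fun ω => Z ε i ω j) μ = gaussianReal 0 (Real.toNNReal ε ^ 2))
    (q : EuclideanSpace ℝ (Fin d) → ℝ) (hq : ∀ x, 0 ≤ q x)
    (hqsupp : ∀ x : EuclideanSpace ℝ (Fin d), ¬ ‖x‖ ≤ R → q x = 0)
    (u : EuclideanSpace ℝ (Fin d)) (hu : ‖u‖ ≤ R)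
    (hqcont : ContinuousAt q u) (hqu : 0 < q u)
    -- differentiability and non-degeneracy of the Jacobians
    (hdiff : ∀ k : ℕ, ∀ v : EuclideanSpace ℝ (Fin d), ‖v‖ ≤ R →
      DifferentiableAt ℝ (Ψ (k * h)) v)
    (hdet : ∀ k : ℕ, ∀ v : EuclideanSpace ℝ (Fin d), ‖v‖ ≤ R →
      jacDet Ψ (k * h) v ≠ 0)
    -- Assumption 6 (anti-leaf sets inside the level sets of the Jacobian determinant):
    (Ut : ℕ → Set (EuclideanSpace ℝ (Fin d)))
    (hUtsub : ∀ k : ℕ, Ut k ⊆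
      {v : EuclideanSpace ℝ (Fin d) | ‖v‖ ≤ R ∧ jacDet Ψ (k * h) v = jacDet Ψ (k * h) u})
    (dmaxk : ℕ → ℝ) (Ck : ℕ → ℝ)
    (hUtrange : ∀ k : ℕ,
      (fun v => ‖Ψ (k * h) v - Ψ (k * h) u‖) '' (Ut k) = Icc 0 (dmaxk k))
    (hCk : ∀ k : ℕ, ∀ v ∈ Ut k,
      ∑ i ∈ Finset.range (k + 1), ‖Ψ (i * h) v - Ψ (i * h) u‖ ^ 2 ≤
        Ck k * ‖Ψ (k * h) v - Ψ (k * h) u‖ ^ 2)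
    (idx : ℕ → ℕ) (hidx : StrictMono idx)
    (Ct dt : ℝ) (hdt : 0 < dt)
    (hCtb : ∀ j : ℕ, Ck (idx j) ≤ Ct) (hdtb : ∀ j : ℕ, dt ≤ dmaxk (idx j))
    (hqUt : ∀ v ∈ ⋃ k : ℕ, Ut k, 0 < q v) :
    ∃ ε₀ : ℝ, 0 < ε₀ ∧ ∀ ε : ℝ, 0 < ε → ε ≤ ε₀ → ∀ j : ℕ,
      ENNReal.ofReal (ε / (2 * ‖H‖ * Real.sqrt Ct)) ≤
        ∫⁻ ω, ENNReal.ofReal (Metric.diam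
          (Ψ (idx j * h) '' {v : EuclideanSpace ℝ (Fin d) | ‖v‖ ≤ R ∧
            Real.exp (-1) ≤ filterRatio Ψ H q h ε u (Z ε) (idx j) v ω})) ∂μ := by
  classical
  have hH0 : ‖H‖ ≠ 0 := ne_of_gt hH
  -- positivity of Ct
  have hCt : 0 < Ct := by
    have hd0 : 0 < dmaxk (idx 0) := lt_of_lt_of_le hdt (hdtb 0)
    have hmem : dmaxk (idx 0) ∈ Icc (0:ℝ) (dmaxk (idx 0)) := ⟨hd0.le, le_refl _⟩
    rw [← hUtrange (idx 0)] at hmem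
    obtain ⟨v0, hv0U, hv0⟩ := hmem
    have hv0' : ‖Ψ (↑(idx 0) * h) v0 - Ψ (↑(idx 0) * h) u‖ = dmaxk (idx 0) := hv0
    have hsum := hCk (idx 0) v0 hv0U
    have hterm : ‖Ψ (↑(idx 0) * h) v0 - Ψ (↑(idx 0) * h) u‖ ^ 2 ≤
        ∑ i ∈ Finset.range (idx 0 + 1), ‖Ψ (↑i * h) v0 - Ψ (↑i * h) u‖ ^ 2 :=
      Finset.single_le_sum (f := fun i : ℕ => ‖Ψ (↑i * h) v0 - Ψ (↑i * h) u‖ ^ 2)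
        (fun i _ => sq_nonneg _) (Finset.self_mem_range_succ _)
    rw [hv0'] at hterm hsum
    nlinarith [hCtb 0, mul_pos hd0 hd0]
  have hsqCt : 0 < Real.sqrt Ct := Real.sqrt_pos.mpr hCt
  have hsq2 : Real.sqrt Ct ^ 2 = Ct := Real.sq_sqrt hCt.le
  -- continuity of the prior at u
  set c0 : ℝ := Real.exp (-(1/2)) with hc0def
  have hc0pos : 0 < c0 := Real.exp_pos _
  have hc0lt : c0 < 1 := by
    rw [hc0def, Real.exp_lt_one_iff]; norm_num
  obtain ⟨δq, hδq, hballq⟩ := Metric.continuousAt_iff.mp hqcont (q u * (1 - c0))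
    (by nlinarith)
  refine ⟨min (dt * (‖H‖ * Real.sqrt Ct)) (‖H‖ * (δq / 2)), by positivity, ?_⟩
  intro ε hε hεle j
  set k := idx j with hkdef
  set r : ℝ := ε / (‖H‖ * Real.sqrt Ct) with hrdef
  have hrpos : 0 < r := by positivity
  -- choose the anti-leaf point v at distance r in observation space
  have hrd : r ≤ dmaxk k := by
    have h1 : ε ≤ dt * (‖H‖ * Real.sqrt Ct) := le_trans hεle (min_le_left _ _)
    have h2 : r ≤ dt := by
      rw [hrdef, div_le_iff₀ (by positivity)]; linarith
    exact h2.trans (hdtb j)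
  obtain ⟨v, hvU, hvr⟩ : ∃ v ∈ Ut k, ‖Ψ (↑k * h) v - Ψ (↑k * h) u‖ = r := by
    have : r ∈ Icc 0 (dmaxk k) := ⟨hrpos.le, hrd⟩
    rw [← hUtrange k] at this
    obtain ⟨v, hv, hv2⟩ := this
    exact ⟨v, hv, hv2⟩
  have hvR : ‖v‖ ≤ R := (hUtsub k hvU).1
  have hvjac : jacDet Ψ (↑k * h) v = jacDet Ψ (↑k * h) u := (hUtsub k hvU).2
  have hsumΔ : ∑ i ∈ Finset.range (k + 1), ‖Ψ (↑i * h) v - Ψ (↑i * h) u‖ ^ 2 ≤ Ct * r ^ 2 := by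
    have h1 := hCk k v hvU
    rw [hvr] at h1
    have h2 : Ck k * r ^ 2 ≤ Ct * r ^ 2 := by nlinarith [hCtb j, sq_nonneg r]
    linarith
  -- v is close to u
  have hvu : ‖v - u‖ ≤ ε / ‖H‖ := by
    have hterm : ‖Ψ (↑(0:ℕ) * h) v - Ψ (↑(0:ℕ) * h) u‖ ^ 2 ≤
        ∑ i ∈ Finset.range (k + 1), ‖Ψ (↑i * h) v - Ψ (↑i * h) u‖ ^ 2 :=
      Finset.single_le_sum (f := fun i : ℕ => ‖Ψ (↑i * h) v - Ψ (↑i * h) u‖ ^ 2)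
        (fun i _ => sq_nonneg _) (Finset.mem_range.mpr (Nat.succ_pos k))
    rw [show ((0:ℕ):ℝ) * h = 0 by simp, hΨ0 v hvR, hΨ0 u hu] at hterm
    have h0 : ‖v - u‖ ^ 2 ≤ Ct * r ^ 2 := hterm.trans hsumΔ
    have heq : Ct * r ^ 2 = (ε / ‖H‖) ^ 2 := by
      rw [hrdef, div_pow, mul_pow, hsq2, div_pow]
      field_simp
    rw [heq] at h0
    have := Real.sqrt_le_sqrt h0
    rwa [Real.sqrt_sq (norm_nonneg _), Real.sqrt_sq (by positivity)] at this
  -- the prior at v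
  have hqv : q u * c0 < q v := by
    have h2 : ε ≤ ‖H‖ * (δq / 2) := le_trans hεle (min_le_right _ _)
    have h3 : ε / ‖H‖ ≤ δq / 2 := by
      rw [div_le_iff₀ hH]; linarith [mul_comm ‖H‖ (δq / 2)]
    have hd : dist v u < δq := by
      rw [dist_eq_norm]; linarith
    have habs : |q v - q u| < q u * (1 - c0) := by
      have := hballq hd
      rwa [Real.dist_eq] at this
    have := (abs_lt.mp habs).1
    nlinarith
  -- the total observation energy is small
  have hS : ∑ i ∈ Finset.range (k + 1), ‖H ((Ψ (↑i * h) v - Ψ (↑i * h) u))‖ ^ 2 ≤ ε ^ 2 := by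
    have h1 : ∀ i ∈ Finset.range (k + 1), ‖H ((Ψ (↑i * h) v - Ψ (↑i * h) u))‖ ^ 2 ≤ ‖H‖ ^ 2 * ‖(Ψ (↑i * h) v - Ψ (↑i * h) u)‖ ^ 2 := by
      intro i _
      rw [← mul_pow]
      exact pow_le_pow_left₀ (norm_nonneg _) (H.le_opNorm _) 2
    calc ∑ i ∈ Finset.range (k + 1), ‖H ((Ψ (↑i * h) v - Ψ (↑i * h) u))‖ ^ 2
        ≤ ∑ i ∈ Finset.range (k + 1), ‖H‖ ^ 2 * ‖(Ψ (↑i * h) v - Ψ (↑i * h) u)‖ ^ 2 := Finset.sum_le_sum h1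
      _ = ‖H‖ ^ 2 * ∑ i ∈ Finset.range (k + 1), ‖(Ψ (↑i * h) v - Ψ (↑i * h) u)‖ ^ 2 := by rw [Finset.mul_sum]
      _ ≤ ‖H‖ ^ 2 * (Ct * r ^ 2) :=
          mul_le_mul_of_nonneg_left hsumΔ (sq_nonneg _)
      _ = ε ^ 2 := by
          rw [hrdef, div_pow, mul_pow, hsq2]
          field_simp
  -- the paired Gaussian functional W
  set W : Ω → ℝ :=
    fun ω => ∑ i ∈ Finset.range (k + 1), (inner ℝ (H ((Ψ (↑i * h) v - Ψ (↑i * h) u))) (Z ε i ω) : ℝ) with hWdef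
  have hWmeas : Measurable W := by
    apply Finset.measurable_sum
    exact fun i _ => Measurable.inner measurable_const (hZmeas ε hε i)
  -- flattening over coordinates
  set c : ℕ × Fin dO → ℝ := fun p => H ((Ψ (↑p.1 * h) v - Ψ (↑p.1 * h) u)) p.2 with hcdef
  set X : ℕ × Fin dO → Ω → ℝ := fun p ω => c p * Z ε p.1 ω p.2 with hXdef
  have hXmeas : ∀ p, Measurable (X p) :=
    fun p => by have := hZmeas ε hε p.1; fun_prop
  have hXindep : iIndepFun X μ :=
    (hZindep ε hε).comp (fun p x => c p * x) (fun p => measurable_const_mul _)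
  have hXsymm : ∀ p, μ.map (fun ω => -(X p ω)) = μ.map (X p) := fun p =>
    aux_scaled_symm (by have := hZmeas ε hε p.1; fun_prop)
      (hZlaw ε hε p.1 p.2) (c p)
  set F : Finset (ℕ × Fin dO) := Finset.range (k + 1) ×ˢ Finset.univ with hFdef
  have hWX : W = fun ω => ∑ p ∈ F, X p ω := by
    funext ω
    rw [hWdef, hFdef]
    rw [Finset.sum_product]
    refine Finset.sum_congr rfl fun i _ => ?_
    rw [PiLp.inner_apply]
    refine Finset.sum_congr rfl fun j _ => ?_
    simp [hXdef, hcdef, RCLike.inner_apply, starRingEnd_apply, mul_comm]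
  have hμW : (1 : ℝ≥0∞) / 2 ≤ μ {ω | 0 ≤ W ω} := by
    apply aux_half_le_prob hWmeas
    rw [hWX]
    exact aux_symm_sum hXmeas hXindep hXsymm F
  -- the high-likelihood set contains v on the event {0 ≤ W}
  have hL : ∀ ω : Ω, 0 ≤ W ω →
      Real.exp (-1) ≤ filterRatio Ψ H q h ε u (Z ε) k v ω := by
    intro ω hω
    have hjac : jacDet Ψ (↑k * h) u / jacDet Ψ (↑k * h) v = 1 := by
      rw [hvjac]; exact div_self (hdet k u hu)
    have hterm : ∀ i : ℕ,
        -(‖H (Ψ (↑i * h) v) - (H (Ψ (↑i * h) u) + Z ε i ω)‖ ^ 2 -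
          ‖H (Ψ (↑i * h) u) - (H (Ψ (↑i * h) u) + Z ε i ω)‖ ^ 2) / (2 * ε ^ 2)
        = (2 * (inner ℝ (H ((Ψ (↑i * h) v - Ψ (↑i * h) u))) (Z ε i ω) : ℝ) - ‖H ((Ψ (↑i * h) v - Ψ (↑i * h) u))‖ ^ 2) / (2 * ε ^ 2) := by
      intro i
      have e1 : H (Ψ (↑i * h) v) - (H (Ψ (↑i * h) u) + Z ε i ω) = H ((Ψ (↑i * h) v - Ψ (↑i * h) u)) - Z ε i ω := by
        rw [map_sub, sub_add_eq_sub_sub]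
      have e2 : H (Ψ (↑i * h) u) - (H (Ψ (↑i * h) u) + Z ε i ω) = -(Z ε i ω) := by
        rw [sub_add_eq_sub_sub, sub_self, zero_sub]
      rw [e1, e2, norm_neg, norm_sub_sq_real]
      ring
    have hval : filterRatio Ψ H q h ε u (Z ε) k v ω =
        (q v / q u) * Real.exp (∑ i ∈ Finset.range (k + 1),
          (2 * (inner ℝ (H ((Ψ (↑i * h) v - Ψ (↑i * h) u))) (Z ε i ω) : ℝ) - ‖H ((Ψ (↑i * h) v - Ψ (↑i * h) u))‖ ^ 2) / (2 * ε ^ 2)) := by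
      rw [filterRatio, hjac, mul_one, Real.exp_sum]
      congr 1
      exact Finset.prod_congr rfl fun i _ => by rw [hterm i]
    have hsumt : ∑ i ∈ Finset.range (k + 1),
        (2 * (inner ℝ (H ((Ψ (↑i * h) v - Ψ (↑i * h) u))) (Z ε i ω) : ℝ) - ‖H ((Ψ (↑i * h) v - Ψ (↑i * h) u))‖ ^ 2) / (2 * ε ^ 2)
        = (2 * W ω - ∑ i ∈ Finset.range (k + 1), ‖H ((Ψ (↑i * h) v - Ψ (↑i * h) u))‖ ^ 2) / (2 * ε ^ 2) := by
      rw [← Finset.sum_div, Finset.sum_sub_distrib, ← Finset.mul_sum, hWdef]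
    have hexp : Real.exp (-(1/2)) ≤ Real.exp (∑ i ∈ Finset.range (k + 1),
        (2 * (inner ℝ (H ((Ψ (↑i * h) v - Ψ (↑i * h) u))) (Z ε i ω) : ℝ) - ‖H ((Ψ (↑i * h) v - Ψ (↑i * h) u))‖ ^ 2) / (2 * ε ^ 2)) := by
      apply Real.exp_le_exp.mpr
      rw [hsumt, le_div_iff₀ (by positivity)]
      nlinarith
    have hqvr : c0 ≤ q v / q u := (le_div_iff₀ hqu).mpr (by nlinarith)
    rw [hval]
    calc Real.exp (-1) = c0 * c0 := by
          rw [hc0def, ← Real.exp_add]; norm_num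
      _ ≤ (q v / q u) * Real.exp (∑ i ∈ Finset.range (k + 1),
          (2 * (inner ℝ (H ((Ψ (↑i * h) v - Ψ (↑i * h) u))) (Z ε i ω) : ℝ) - ‖H ((Ψ (↑i * h) v - Ψ (↑i * h) u))‖ ^ 2) / (2 * ε ^ 2)) :=
        mul_le_mul hqvr hexp hc0pos.le (div_nonneg (hq v) hqu.le)
  -- u is always in the high-likelihood set
  have hLu : ∀ ω : Ω, Real.exp (-1) ≤ filterRatio Ψ H q h ε u (Z ε) k u ω := by
    intro ω
    have hval : filterRatio Ψ H q h ε u (Z ε) k u ω = 1 := by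
      rw [filterRatio, div_self hqu.ne', div_self (hdet k u hu)]
      simp
    rw [hval]
    calc Real.exp (-1) ≤ Real.exp 0 := Real.exp_le_exp.mpr (by norm_num)
      _ = 1 := Real.exp_zero
  -- the diameter bound on the event {0 ≤ W}
  have hdiam : ∀ ω : Ω, 0 ≤ W ω → r ≤ Metric.diam
      (Ψ (↑k * h) '' {v' : EuclideanSpace ℝ (Fin d) | ‖v'‖ ≤ R ∧
        Real.exp (-1) ≤ filterRatio Ψ H q h ε u (Z ε) k v' ω}) := by
    intro ω hω
    have hbd : Bornology.IsBounded (Ψ (↑k * h) ''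
        {v' : EuclideanSpace ℝ (Fin d) | ‖v'‖ ≤ R ∧
          Real.exp (-1) ≤ filterRatio Ψ H q h ε u (Z ε) k v' ω}) := by
      apply Bornology.IsBounded.subset
        (Metric.isBounded_closedBall (x := (0 : EuclideanSpace ℝ (Fin d))) (r := R))
      rintro x ⟨w, hw, rfl⟩
      rw [Metric.mem_closedBall, dist_zero_right]
      exact hΨR w hw.1 _ (by positivity)
    have hmem1 : Ψ (↑k * h) u ∈ Ψ (↑k * h) ''
        {v' : EuclideanSpace ℝ (Fin d) | ‖v'‖ ≤ R ∧
          Real.exp (-1) ≤ filterRatio Ψ H q h ε u (Z ε) k v' ω} :=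
      ⟨u, ⟨hu, hLu ω⟩, rfl⟩
    have hmem2 : Ψ (↑k * h) v ∈ Ψ (↑k * h) ''
        {v' : EuclideanSpace ℝ (Fin d) | ‖v'‖ ≤ R ∧
          Real.exp (-1) ≤ filterRatio Ψ H q h ε u (Z ε) k v' ω} :=
      ⟨v, ⟨hvR, hL ω hω⟩, rfl⟩
    have := Metric.dist_le_diam_of_mem hbd hmem2 hmem1
    rwa [dist_eq_norm, hvr] at this
  -- the final chain of estimates
  have hWset : MeasurableSet {ω | 0 ≤ W ω} := measurableSet_le measurable_const hWmeas
  calc ENNReal.ofReal (ε / (2 * ‖H‖ * Real.sqrt Ct))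
      = ENNReal.ofReal (r / 2) := by
        rw [hrdef, div_div]; ring_nf
    _ = ENNReal.ofReal r / 2 := by
        rw [ENNReal.ofReal_div_of_pos (by norm_num)]
        norm_num
    _ = ENNReal.ofReal r * (1 / 2) := by
        rw [mul_one_div]
    _ ≤ ENNReal.ofReal r * μ {ω | 0 ≤ W ω} := mul_le_mul_right hμW _
    _ = ∫⁻ ω, {ω | 0 ≤ W ω}.indicator (fun _ => ENNReal.ofReal r) ω ∂μ :=
        (lintegral_indicator_const hWset _).symm
    _ ≤ ∫⁻ ω, ENNReal.ofReal (Metric.diam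
          (Ψ (↑k * h) '' {v' : EuclideanSpace ℝ (Fin d) | ‖v'‖ ≤ R ∧
            Real.exp (-1) ≤ filterRatio Ψ H q h ε u (Z ε) k v' ω})) ∂μ := by
        apply lintegral_mono
        intro ω
        by_cases hω : 0 ≤ W ω
        · have he : ({ω' : Ω | 0 ≤ W ω'}).indicator
              (fun _ => ENNReal.ofReal r) ω = ENNReal.ofReal r :=
            Set.indicator_of_mem (show ω ∈ {ω' : Ω | 0 ≤ W ω'} from hω) _
          rw [he]
          exact ENNReal.ofReal_le_ofReal (hdiam ω hω)
        · have he : ({ω' : Ω | 0 ≤ W ω'}).indicator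
              (fun _ => ENNReal.ofReal r) ω = 0 :=
            Set.indicator_of_notMem (show ω ∉ {ω' : Ω | 0 ≤ W ω'} from hω) _
          rw [he]
          exact zero_le

end
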